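/- For all ρ, r, α > 0 with ρ ≠ r, the integral ∫₀^∞ t^{-1} e^{-(ρ²+r²)/(2t)} I_α(ρr/t) dt equals α^{-1} γ^α [1 + (1-γ²)^{1/2}]^{-α}, where γ = 2ρr/(ρ²+r²). -/

import Mathlib

open MeasureTheory Real Set Filter

noncomputable def besselI (ν z : ℝ) : ℝ :=
  (z / 2) ^ ν * ∑' k : ℕ, (z / 2) ^ (2 * k) / (k.factorial * Real.Gamma (ν + k + 1))

open Topology

namespace BesselAux


/-- series coefficients -/
noncomputable def c (α : ℝ) (k : ℕ) : ℝ :=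
  Real.Gamma (α + 2 * k) / (k.factorial * Real.Gamma (α + k + 1))

lemma c_pos {α : ℝ} (hα : 0 < α) (k : ℕ) : 0 < c α k := by
  apply div_pos (Real.Gamma_pos_of_pos (by positivity))
  exact mul_pos (by positivity) (Real.Gamma_pos_of_pos (by positivity))

lemma c_zero {α : ℝ} (hα : 0 < α) : c α 0 = α⁻¹ := by
  simp only [c, Nat.cast_zero, mul_zero, add_zero, Nat.factorial_zero, Nat.cast_one, one_mul]
  rw [Real.Gamma_add_one hα.ne']
  have hg := (Real.Gamma_pos_of_pos hα).ne'
  field_simp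

lemma c_one {α : ℝ} (hα : 0 < α) : c α 1 = 1 := by
  simp only [c, Nat.cast_one, mul_one, Nat.factorial_one]
  rw [show α + 2 = α + 1 + 1 by ring]
  field_simp [Real.Gamma_pos_of_pos (show (0:ℝ) < α + 1 + 1 by linarith) |>.ne']

lemma c_rec {α : ℝ} (hα : 0 < α) (k : ℕ) :
    ((k:ℝ) + 1) * (α + k + 1) * c α (k + 1) = (α + 2 * k) * (α + 2 * k + 1) * c α k := by
  have h1 : (0:ℝ) < α + 2 * k := by positivity
  have h2 : (0:ℝ) < α + 2 * k + 1 := by positivity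
  have h3 : (0:ℝ) < α + k + 1 := by positivity
  have hg1 : Real.Gamma (α + 2 * (k + 1 : ℕ)) = (α + 2*k+1) * ((α + 2*k) * Real.Gamma (α + 2*k)) := by
    push_cast
    rw [show α + 2 * ((k:ℝ) + 1) = (α + 2*k + 1) + 1 by ring, Real.Gamma_add_one h2.ne',
      show α + 2 * (k:ℝ) + 1 = (α + 2*k) + 1 by ring, Real.Gamma_add_one h1.ne']
  have hg2 : Real.Gamma (α + (k + 1 : ℕ) + 1) = (α + k + 1) * Real.Gamma (α + k + 1) := by
    push_cast
    rw [show α + ((k:ℝ) + 1) + 1 = (α + k + 1) + 1 by ring, Real.Gamma_add_one h3.ne']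
  have hfac : (((k+1).factorial : ℝ)) = (k + 1) * k.factorial := by
    rw [Nat.factorial_succ]; push_cast; ring
  have hΓ : Real.Gamma (α + k + 1) ≠ 0 := (Real.Gamma_pos_of_pos h3).ne'
  have hfk : (k.factorial : ℝ) ≠ 0 := by positivity
  simp only [c, hg1, hg2, hfac]
  field_simp

/-- growth: c α k ≤ C * 4 ^ k for some positive C -/
lemma c_growth {α : ℝ} (hα : 0 < α) : ∃ C : ℝ, 0 < C ∧ ∀ k, c α k ≤ C * 4 ^ k := by
  set N : ℕ := ⌈α * α⌉₊ with hN
  have hstep : ∀ m : ℕ, N ≤ m → c α (m + 1) ≤ 4 * c α m := by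
    intro m hm
    have hm' : α * α ≤ m := le_trans (Nat.le_ceil _) (by exact_mod_cast hm)
    have h3 : (0:ℝ) < α + m + 1 := by positivity
    have hrec := c_rec hα m
    have hkey : (α + 2*m) * (α + 2*m + 1) ≤ 4 * (((m:ℝ) + 1) * (α + m + 1)) := by nlinarith
    have hc := c_pos hα m
    have h4 : (0:ℝ) < ((m:ℝ) + 1) * (α + m + 1) := by positivity
    have h5 : ((m:ℝ) + 1) * (α + m + 1) * c α (m + 1) ≤ ((m:ℝ) + 1) * (α + m + 1) * (4 * c α m) := by
      rw [hrec]
      nlinarith [mul_le_mul_of_nonneg_right hkey hc.le]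
    exact le_of_mul_le_mul_left h5 h4
  -- C := sum of c α i / 4^i over i ≤ N
  refine ⟨∑ i ∈ Finset.range (N + 1), c α i / 4 ^ i, ?_, ?_⟩
  · exact Finset.sum_pos (fun i _ => div_pos (c_pos hα i) (by positivity)) ⟨0, by simp⟩
  · intro k
    rcases le_or_gt k N with hk | hk
    · have h1 : c α k / 4 ^ k ≤ ∑ i ∈ Finset.range (N + 1), c α i / 4 ^ i :=
        Finset.single_le_sum (f := fun i => c α i / 4 ^ i)
          (fun i _ => (div_pos (c_pos hα i) (by positivity)).le) (by simp [Nat.lt_succ_iff, hk])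
      calc c α k = c α k / 4 ^ k * 4 ^ k := by field_simp
      _ ≤ _ := by
        apply mul_le_mul_of_nonneg_right h1 (by positivity)
    · -- k > N
      obtain ⟨j, rfl⟩ : ∃ j, k = N + j := ⟨k - N, by omega⟩
      have key : ∀ j : ℕ, c α (N + j) ≤ c α N * 4 ^ j := by
        intro j
        induction j with
        | zero => simp
        | succ n ih =>
          have := hstep (N + n) (Nat.le_add_right _ _)
          calc c α (N + (n+1)) = c α ((N + n) + 1) := by ring_nf
          _ ≤ 4 * c α (N + n) := this
          _ ≤ 4 * (c α N * 4 ^ n) := by linarith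
          _ = c α N * 4 ^ (n+1) := by ring
      calc c α (N + j) ≤ c α N * 4 ^ j := key j
      _ ≤ (∑ i ∈ Finset.range (N + 1), c α i / 4 ^ i) * 4 ^ N * 4 ^ j := by
          have h1 : c α N / 4 ^ N ≤ ∑ i ∈ Finset.range (N + 1), c α i / 4 ^ i :=
            Finset.single_le_sum (f := fun i => c α i / 4 ^ i)
              (fun i _ => (div_pos (c_pos hα i) (by positivity)).le) (by simp)
          have : c α N ≤ (∑ i ∈ Finset.range (N + 1), c α i / 4 ^ i) * 4 ^ N := by
            calc c α N = c α N / 4 ^ N * 4 ^ N := by field_simp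
            _ ≤ _ := mul_le_mul_of_nonneg_right h1 (by positivity)
          exact mul_le_mul_of_nonneg_right this (by positivity)
      _ = (∑ i ∈ Finset.range (N + 1), c α i / 4 ^ i) * 4 ^ (N + j) := by
          rw [pow_add]; ring


lemma summable_E {q : ℝ} (h0 : 0 ≤ q) (h1 : q < 1) :
    Summable (fun k : ℕ => ((k:ℝ) + 1) ^ 3 * q ^ k) := by
  have hq : ‖q‖ < 1 := by rwa [Real.norm_eq_abs, abs_of_nonneg h0]
  have h3 := summable_pow_mul_geometric_of_norm_lt_one (R := ℝ) 3 hq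
  have h2 := summable_pow_mul_geometric_of_norm_lt_one (R := ℝ) 2 hq
  have hh1 := summable_pow_mul_geometric_of_norm_lt_one (R := ℝ) 1 hq
  have hh0 := summable_pow_mul_geometric_of_norm_lt_one (R := ℝ) 0 hq
  exact Summable.congr ((h3.add (h2.mul_left 3)).add ((hh1.mul_left 3).add hh0))
    (fun k => by push_cast; ring)

/-- master bound -/
lemma bound_master {α r : ℝ} (hα : 0 < α) (hr : 0 < r) :
    ∃ C : ℝ, 0 < C ∧ ∀ (P : ℕ → ℝ) (d : ℝ) (j : ℕ), j ≤ 2 →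
      (∀ k, |P k| ≤ d * ((k:ℝ) + 1) ^ 3) → (∀ k, k < j → P k = 0) →
      ∀ z : ℝ, |z| ≤ r → ∀ k,
        |P k * c α k * z ^ (k - j)| ≤ (C * d) * (((k:ℝ) + 1) ^ 3 * (4 * r) ^ k) := by
  obtain ⟨C₀, hC₀, hg⟩ := c_growth hα
  refine ⟨C₀ * (1 + 1/r + 1/r^2), by positivity, ?_⟩
  intro P d j hj hPd hPz z hz k
  have hd : 0 ≤ d := by
    have h0 := hPd 0
    simp at h0
    exact le_trans (abs_nonneg _) h0
  rcases lt_or_ge k j with hk | hk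
  · rw [hPz k hk]
    simp only [zero_mul, abs_zero]
    positivity
  · obtain ⟨m, rfl⟩ : ∃ m, k = j + m := ⟨k - j, by omega⟩
    have hsub : j + m - j = m := by omega
    rw [hsub]
    have hz' : |z ^ m| ≤ r ^ m := by
      rw [abs_pow]; exact pow_le_pow_left₀ (abs_nonneg z) hz m
    have hc' : |c α (j+m)| ≤ C₀ * 4 ^ (j+m) := by
      rw [abs_of_pos (c_pos hα _)]; exact hg _
    have hp' : |P (j+m)| ≤ d * (((j+m:ℕ):ℝ) + 1)^3 := hPd _
    have h1 : |P (j + m) * c α (j + m) * z ^ m| ≤ (d * (((j+m:ℕ):ℝ) + 1) ^ 3) * (C₀ * 4 ^ (j+m)) * r ^ m := by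
      calc |P (j + m) * c α (j + m) * z ^ m| = |P (j+m)| * |c α (j+m)| * |z ^ m| := by
            rw [abs_mul, abs_mul]
        _ ≤ (d * (((j+m:ℕ):ℝ) + 1)^3) * (C₀ * 4^(j+m)) * r^m :=
            mul_le_mul (mul_le_mul hp' hc' (abs_nonneg _) (by positivity)) hz' (abs_nonneg _)
              (by positivity)
    refine h1.trans ?_
    have key : (4:ℝ) ^ (j + m) * r ^ m ≤ (1 + 1/r + 1/r^2) * (4*r) ^ (j + m) := by
      have h4r : (4*r:ℝ) ^ (j+m) = (4:ℝ)^(j+m) * r^j * r^m := by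
        rw [mul_pow, pow_add]; ring
      rw [h4r]
      have hrj : (1:ℝ) ≤ (1 + 1/r + 1/r^2) * r ^ j := by
        interval_cases j
        · have h1 : 0 < 1/r := by positivity
          have h2 : 0 < 1/r^2 := by positivity
          simp only [pow_zero, mul_one]
          linarith
        · rw [pow_one]
          have e1 : 1/r * r = 1 := by field_simp
          have e2 : 0 < 1/r^2 * r := by positivity
          have expand : (1 + 1/r + 1/r^2) * r = r + 1/r*r + 1/r^2*r := by ring
          rw [expand, e1]
          linarith
        · have e1 : 1/r^2 * r^2 = 1 := by field_simp
          have e2 : 0 < 1/r * r^2 := by positivity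
          have expand : (1 + 1/r + 1/r^2) * r^2 = r^2 + 1/r*r^2 + 1/r^2*r^2 := by ring
          rw [expand, e1]
          nlinarith [pow_pos hr 2]
      calc (4:ℝ)^(j+m) * r^m = ((4:ℝ)^(j+m) * r^m) * 1 := by ring
      _ ≤ ((4:ℝ)^(j+m) * r^m) * ((1 + 1/r + 1/r^2) * r ^ j) := by
          apply mul_le_mul_of_nonneg_left hrj (by positivity)
      _ = (1 + 1/r + 1/r^2) * ((4:ℝ)^(j+m) * r^j * r^m) := by ring
    calc (d * (((j+m:ℕ):ℝ) + 1) ^ 3) * (C₀ * 4 ^ (j+m)) * r ^ m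
        = (C₀ * d) * ((((j+m:ℕ):ℝ) + 1) ^ 3) * ((4:ℝ) ^ (j+m) * r ^ m) := by ring
      _ ≤ (C₀ * d) * ((((j+m:ℕ):ℝ) + 1) ^ 3) * ((1 + 1/r + 1/r^2) * (4*r) ^ (j+m)) := by
          apply mul_le_mul_of_nonneg_left key (by positivity)
      _ = (C₀ * (1 + 1/r + 1/r^2) * d) * ((((j+m:ℕ):ℝ) + 1) ^ 3 * (4*r) ^ (j+m)) := by ring


noncomputable def T (α : ℝ) (z : ℝ) : ℝ := ∑' k : ℕ, c α k * z ^ k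
noncomputable def T1 (α : ℝ) (z : ℝ) : ℝ := ∑' k : ℕ, c α k * ((k:ℝ) * z ^ (k - 1))
noncomputable def T2 (α : ℝ) (z : ℝ) : ℝ :=
  ∑' k : ℕ, c α k * ((k:ℝ) * (((k - 1 : ℕ)):ℝ) * z ^ (k - 2))

section Deriv

variable {α r : ℝ} (hα : 0 < α) (hr : 0 < r) (hq : 4 * r < 1)

lemma P0_le : ∀ k : ℕ, |(1:ℝ)| ≤ 1 * ((k:ℝ) + 1) ^ 3 := by
  intro k
  rw [abs_one, one_mul]
  have h0 : (0:ℝ) ≤ k := Nat.cast_nonneg k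
  have e : ((k:ℝ)+1)^3 = (k:ℝ)^3+3*(k:ℝ)^2+3*(k:ℝ)+1 := by ring
  rw [e]
  nlinarith [pow_nonneg h0 3, pow_nonneg h0 2]

lemma P1_le : ∀ k : ℕ, |(k:ℝ)| ≤ 1 * ((k:ℝ) + 1) ^ 3 := by
  intro k
  rw [abs_of_nonneg (Nat.cast_nonneg k), one_mul]
  have h0 : (0:ℝ) ≤ k := Nat.cast_nonneg k
  have e : ((k:ℝ)+1)^3 = (k:ℝ)^3+3*(k:ℝ)^2+3*(k:ℝ)+1 := by ring
  rw [e]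
  nlinarith [pow_nonneg h0 3, pow_nonneg h0 2]

lemma P2_le : ∀ k : ℕ, |(k:ℝ) * ((k-1 : ℕ):ℝ)| ≤ 1 * ((k:ℝ) + 1) ^ 3 := by
  intro k
  rw [abs_of_nonneg (by positivity), one_mul]
  have h1 : ((k-1:ℕ):ℝ) ≤ (k:ℝ) := by exact_mod_cast Nat.sub_le k 1
  have h0 : (0:ℝ) ≤ k := Nat.cast_nonneg k
  have h3 : (k:ℝ) * ((k-1:ℕ):ℝ) ≤ (k:ℝ)^2 := by nlinarith [Nat.cast_nonneg (α := ℝ) (k-1)]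
  have e : ((k:ℝ)+1)^3 = (k:ℝ)^3+3*(k:ℝ)^2+3*(k:ℝ)+1 := by ring
  rw [e]
  nlinarith [pow_nonneg h0 3, pow_nonneg h0 2]

include hα hr hq in
lemma summable_T {z : ℝ} (hz : |z| ≤ r) : Summable (fun k : ℕ => c α k * z ^ k) := by
  obtain ⟨C, hC, hB⟩ := bound_master (r := r) hα hr
  apply Summable.of_norm_bounded (g := fun k : ℕ => (C * 1) * (((k:ℝ) + 1) ^ 3 * (4*r) ^ k))
    (((summable_E (by positivity) hq).mul_left _))
  intro k
  rw [Real.norm_eq_abs, show c α k * z ^ k = 1 * c α k * z ^ (k - 0) from by simp]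
  exact hB _ 1 0 (by norm_num) P0_le (by omega) z hz k

include hα hr hq in
lemma hasDerivAt_T {z : ℝ} (hz : z ∈ Ioo (-r) r) : HasDerivAt (T α) (T1 α z) z := by
  obtain ⟨C, hC, hB⟩ := bound_master (r := r) hα hr
  unfold T T1
  apply hasDerivAt_tsum_of_isPreconnected
    (u := fun k : ℕ => (C * 1) * (((k:ℝ) + 1) ^ 3 * (4*r) ^ k))
    (((summable_E (by positivity) hq).mul_left _)) isOpen_Ioo
    ((convex_Ioo _ _).isPreconnected)
    (fun k y _ => (hasDerivAt_pow k y).const_mul (c α k))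
    (fun k y hy => ?_) (show (0:ℝ) ∈ Ioo (-r) r from mem_Ioo.mpr ⟨by linarith, hr⟩)
    (summable_T hα hr hq (by simp [hr.le])) hz
  have hy' : |y| ≤ r := by
    rw [abs_le]; exact ⟨hy.1.le, hy.2.le⟩
  rw [Real.norm_eq_abs,
    show c α k * ((k:ℝ) * y ^ (k-1)) = (k:ℝ) * c α k * y ^ (k - 1) from by ring]
  exact hB _ 1 1 (by norm_num) P1_le (by intro k hk; interval_cases k; simp) y hy' k

include hα hr hq in
lemma hasDerivAt_T1 {z : ℝ} (hz : z ∈ Ioo (-r) r) : HasDerivAt (T1 α) (T2 α z) z := by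
  obtain ⟨C, hC, hB⟩ := bound_master (r := r) hα hr
  unfold T1 T2
  have hterm : ∀ (k : ℕ) (y : ℝ), HasDerivAt (fun x => c α k * ((k:ℝ) * x ^ (k-1)))
      (c α k * ((k:ℝ) * (((k-1:ℕ)):ℝ) * y ^ (k-2))) y := by
    intro k y
    have h := (hasDerivAt_pow (k-1) y).const_mul (c α k * (k:ℝ))
    have hfun : (fun x : ℝ => c α k * (k:ℝ) * x ^ (k-1)) =
        (fun x => c α k * ((k:ℝ) * x ^ (k-1))) := by
      funext x; ring
    rw [hfun] at h
    refine h.congr_deriv ?_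
    rw [Nat.sub_sub, show 1+1 = 2 from rfl]
    ring
  have hsum0 : Summable (fun k : ℕ => c α k * ((k:ℝ) * (0:ℝ) ^ (k-1))) := by
    apply Summable.of_norm_bounded (g := fun k : ℕ => (C*1) * (((k:ℝ)+1)^3*(4*r)^k))
      ((summable_E (by positivity) hq).mul_left _)
    intro k
    rw [Real.norm_eq_abs,
      show c α k * ((k:ℝ) * (0:ℝ)^(k-1)) = (k:ℝ) * c α k * (0:ℝ)^(k-1) from by ring]
    exact hB _ 1 1 (by norm_num) P1_le (by intro k hk; interval_cases k; simp) 0 (by simp [hr.le]) k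
  apply hasDerivAt_tsum_of_isPreconnected
    (u := fun k : ℕ => (C * 1) * (((k:ℝ) + 1) ^ 3 * (4*r) ^ k))
    ((summable_E (by positivity) hq).mul_left _) isOpen_Ioo
    ((convex_Ioo _ _).isPreconnected)
    (fun k y _ => hterm k y)
    (fun k y hy => ?_) (show (0:ℝ) ∈ Ioo (-r) r from mem_Ioo.mpr ⟨by linarith, hr⟩)
    hsum0 hz
  have hy' : |y| ≤ r := by
    rw [abs_le]; exact ⟨hy.1.le, hy.2.le⟩
  rw [Real.norm_eq_abs,
    show c α k * ((k:ℝ) * (((k-1:ℕ)):ℝ) * y ^ (k-2)) = ((k:ℝ) * ((k-1:ℕ):ℝ)) * c α k * y ^ (k - 2) from by ring]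
  refine hB _ 1 2 (by norm_num) P2_le ?_ y hy' k
  intro k hk; interval_cases k <;> simp

lemma PX_le (hα : 0 < α) : ∀ k : ℕ, |(k:ℝ) * (α + k)| ≤ (α+1) * ((k:ℝ)+1)^3 := by
  intro k
  have h0 : (0:ℝ) ≤ k := Nat.cast_nonneg k
  rw [abs_of_nonneg (by positivity)]
  have e : ((k:ℝ)+1)^3 = (k:ℝ)^3+3*(k:ℝ)^2+3*(k:ℝ)+1 := by ring
  rw [e]
  nlinarith [mul_nonneg hα.le h0, mul_nonneg (mul_nonneg hα.le h0) h0,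
    mul_nonneg (mul_nonneg (mul_nonneg hα.le h0) h0) h0, pow_nonneg h0 3, pow_nonneg h0 2]

lemma PY_le (hα : 0 < α) : ∀ k : ℕ,
    |-((α+2*(k:ℝ))*(α+2*(k:ℝ)+1))| ≤ ((α+2)*(α+3)) * ((k:ℝ)+1)^3 := by
  intro k
  have h0 : (0:ℝ) ≤ k := Nat.cast_nonneg k
  rw [abs_neg, abs_of_nonneg (by positivity)]
  have h1 : α+2*(k:ℝ) ≤ (α+2)*((k:ℝ)+1) := by nlinarith [mul_nonneg hα.le h0]
  have h2 : α+2*(k:ℝ)+1 ≤ (α+3)*((k:ℝ)+1) := by nlinarith [mul_nonneg hα.le h0]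
  have h3 : (α+2*(k:ℝ))*(α+2*(k:ℝ)+1) ≤ ((α+2)*((k:ℝ)+1))*((α+3)*((k:ℝ)+1)) :=
    mul_le_mul h1 h2 (by positivity) (by positivity)
  have h4 : ((k:ℝ)+1)^2 ≤ ((k:ℝ)+1)^3 := by
    apply pow_le_pow_right₀ (by linarith) (by norm_num)
  nlinarith [mul_nonneg (mul_nonneg (by linarith : (0:ℝ) ≤ α+2) (by linarith : (0:ℝ) ≤ α+3)) (sq_nonneg ((k:ℝ)+1))]

include hα hr hq in
lemma summable_T1' {z : ℝ} (hz : |z| ≤ r) :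
    Summable (fun k : ℕ => c α k * ((k:ℝ) * z ^ (k-1))) := by
  obtain ⟨C, hC, hB⟩ := bound_master (r := r) hα hr
  apply Summable.of_norm_bounded (g := fun k : ℕ => (C * 1) * (((k:ℝ) + 1) ^ 3 * (4*r) ^ k))
    ((summable_E (by positivity) hq).mul_left _)
  intro k
  rw [Real.norm_eq_abs,
    show c α k * ((k:ℝ) * z^(k-1)) = (k:ℝ) * c α k * z^(k-1) from by ring]
  exact hB _ 1 1 (by norm_num) P1_le (by intro k hk; interval_cases k; simp) z hz k

include hα hr hq in
lemma summable_T2' {z : ℝ} (hz : |z| ≤ r) :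
    Summable (fun k : ℕ => c α k * ((k:ℝ) * (((k-1:ℕ)):ℝ) * z ^ (k-2))) := by
  obtain ⟨C, hC, hB⟩ := bound_master (r := r) hα hr
  apply Summable.of_norm_bounded (g := fun k : ℕ => (C * 1) * (((k:ℝ) + 1) ^ 3 * (4*r) ^ k))
    ((summable_E (by positivity) hq).mul_left _)
  intro k
  rw [Real.norm_eq_abs,
    show c α k * ((k:ℝ) * ((k-1:ℕ):ℝ) * z^(k-2)) = ((k:ℝ) * ((k-1:ℕ):ℝ)) * c α k * z^(k-2) from by ring]
  refine hB _ 1 2 (by norm_num) P2_le ?_ z hz k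
  intro k hk; interval_cases k <;> simp

include hα hr hq in
lemma summable_X {z : ℝ} (hz : |z| ≤ r) :
    Summable (fun k : ℕ => c α k * ((k:ℝ) * (α + k) * z ^ (k-1))) := by
  obtain ⟨C, hC, hB⟩ := bound_master (r := r) hα hr
  apply Summable.of_norm_bounded (g := fun k : ℕ => (C * (α+1)) * (((k:ℝ) + 1) ^ 3 * (4*r) ^ k))
    ((summable_E (by positivity) hq).mul_left _)
  intro k
  rw [Real.norm_eq_abs,
    show c α k * ((k:ℝ) * (α+k) * z^(k-1)) = ((k:ℝ) * (α+k)) * c α k * z^(k-1) from by ring]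
  refine hB _ (α+1) 1 (by norm_num) (PX_le hα) ?_ z hz k
  intro k hk; interval_cases k; simp

include hα hr hq in
lemma summable_Y {z : ℝ} (hz : |z| ≤ r) :
    Summable (fun k : ℕ => -((α+2*(k:ℝ))*(α+2*(k:ℝ)+1)) * (c α k * z ^ k)) := by
  obtain ⟨C, hC, hB⟩ := bound_master (r := r) hα hr
  apply Summable.of_norm_bounded
    (g := fun k : ℕ => (C * ((α+2)*(α+3))) * (((k:ℝ) + 1) ^ 3 * (4*r) ^ k))
    ((summable_E (by positivity) hq).mul_left _)
  intro k
  rw [Real.norm_eq_abs,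
    show -((α+2*(k:ℝ))*(α+2*(k:ℝ)+1)) * (c α k * z^k)
      = -((α+2*(k:ℝ))*(α+2*(k:ℝ)+1)) * c α k * z^(k-0) from by simp; ring]
  exact hB _ ((α+2)*(α+3)) 0 (by norm_num) (PY_le hα) (by omega) z hz k

include hα in
lemma T_zero : T α 0 = α⁻¹ := by
  unfold T
  rw [tsum_eq_single 0 ?_]
  · simp [c_zero hα]
  · intro b hb
    simp [zero_pow hb]

include hα in
lemma T1_zero : T1 α 0 = 1 := by
  unfold T1
  rw [tsum_eq_single 1 ?_]
  · simp [c_one hα]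
  · intro b hb
    match b with
    | 0 => simp
    | Nat.succ n =>
      have hn : n ≠ 0 := by rintro rfl; exact hb rfl
      simp [zero_pow hn]

include hα hr hq in
lemma T_ode {z : ℝ} (hz : z ∈ Ioo (-r) r) :
    z * (1 - 4*z) * T2 α z + ((α+1) - (4*α+6)*z) * T1 α z - α*(α+1) * T α z = 0 := by
  have hzr : |z| ≤ r := by rw [abs_le]; exact ⟨hz.1.le, hz.2.le⟩
  set X := fun k : ℕ => c α k * ((k:ℝ) * (α + k) * z ^ (k-1)) with hX
  set Y := fun k : ℕ => -((α+2*(k:ℝ))*(α+2*(k:ℝ)+1)) * (c α k * z ^ k) with hY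
  have SX := summable_X hα hr hq hzr
  have SY := summable_Y hα hr hq hzr
  have ST0 := summable_T hα hr hq hzr
  have ST1 := summable_T1' hα hr hq hzr
  have ST2 := summable_T2' hα hr hq hzr
  have hmain : z * (1 - 4*z) * T2 α z + ((α+1) - (4*α+6)*z) * T1 α z - α*(α+1) * T α z
      = ∑' k : ℕ, ((z * (1-4*z)) * (c α k * ((k:ℝ) * (((k-1:ℕ)):ℝ) * z ^ (k-2)))
          + ((α+1) - (4*α+6)*z) * (c α k * ((k:ℝ) * z ^ (k-1)))
          - α*(α+1) * (c α k * z ^ k)) := by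
    unfold T T1 T2
    rw [← tsum_mul_left, ← tsum_mul_left, ← tsum_mul_left,
      ← Summable.tsum_add (ST2.mul_left (z * (1-4*z))) (ST1.mul_left ((α+1) - (4*α+6)*z)),
      ← Summable.tsum_sub ((ST2.mul_left (z * (1-4*z))).add (ST1.mul_left ((α+1) - (4*α+6)*z)))
        (ST0.mul_left (α*(α+1)))]
  rw [hmain]
  have hXY : ∀ k : ℕ, ((z * (1-4*z)) * (c α k * ((k:ℝ) * (((k-1:ℕ)):ℝ) * z ^ (k-2)))
          + ((α+1) - (4*α+6)*z) * (c α k * ((k:ℝ) * z ^ (k-1)))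
          - α*(α+1) * (c α k * z ^ k)) = X k + Y k := by
    intro k
    simp only [hX, hY]
    match k with
    | 0 => push_cast; ring_nf
    | 1 => push_cast; ring_nf
    | (n+2) =>
      rw [show n+2-1 = n+1 by omega, show n+2-2 = n by omega]
      push_cast
      ring
  have hkey : ∀ k : ℕ, X (k+1) + Y k = 0 := by
    intro k
    have hrec := c_rec hα k
    simp only [hX, hY]
    rw [show k+1-1 = k by omega]
    push_cast
    linear_combination z ^ k * hrec
  calc ∑' k : ℕ, ((z * (1-4*z)) * (c α k * ((k:ℝ) * (((k-1:ℕ)):ℝ) * z ^ (k-2)))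
          + ((α+1) - (4*α+6)*z) * (c α k * ((k:ℝ) * z ^ (k-1)))
          - α*(α+1) * (c α k * z ^ k))
      = ∑' k : ℕ, (X k + Y k) := tsum_congr hXY
    _ = (∑' k, X k) + ∑' k, Y k := Summable.tsum_add SX SY
    _ = (∑' k, X (k+1)) + ∑' k, Y k := by
        rw [Summable.tsum_eq_zero_add SX]
        simp [hX]
    _ = ∑' k : ℕ, (X (k+1) + Y k) := (Summable.tsum_add ((summable_nat_add_iff 1).2 SX) SY).symm
    _ = ∑' k : ℕ, (0:ℝ) := tsum_congr hkey
    _ = 0 := tsum_zero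

end Deriv


section Bside

noncomputable def w (z : ℝ) : ℝ := Real.sqrt (1 - 4*z)
noncomputable def B (z : ℝ) : ℝ := 2 / (1 + w z)
noncomputable def U (α z : ℝ) : ℝ := B z ^ α
noncomputable def V (α z : ℝ) : ℝ := α * B z ^ (α+1) / w z
noncomputable def V' (α z : ℝ) : ℝ :=
  α*(α+1) * B z ^ (α+2) / (w z)^2 + 2*α* B z ^ (α+1) / (w z)^3

variable {α z : ℝ}

lemma w_nonneg : 0 ≤ w z := Real.sqrt_nonneg _

lemma w_pos (hz : z < 1/4) : 0 < w z := Real.sqrt_pos.mpr (by linarith)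

lemma w_sq (hz : z < 1/4) : w z ^ 2 = 1 - 4*z := Real.sq_sqrt (by linarith)

lemma one_add_w_pos : 0 < 1 + w z := by have := w_nonneg (z := z); linarith

lemma B_pos : 0 < B z := div_pos two_pos one_add_w_pos

lemma B_lt_two (hz : z < 1/4) : B z < 2 := by
  have h1 := one_add_w_pos (z := z)
  have h2 := w_pos hz
  rw [B, div_lt_iff₀ h1]
  linarith

lemma hw_eq (hz : z < 1/4) : w z = (2 - B z) / B z := by
  have h1 := one_add_w_pos (z := z)
  rw [B]
  field_simp
  ring

lemma hz_eq (hz : z < 1/4) : z = (B z - 1) / (B z)^2 := by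
  have h1 := one_add_w_pos (z := z)
  have h2 := w_sq hz
  rw [B]
  field_simp
  nlinarith [h2]

lemma hasDerivAt_w (hz : z < 1/4) : HasDerivAt w (-2 / w z) z := by
  have h1 : HasDerivAt (fun y : ℝ => 1 - 4*y) (-4) z := by
    exact (((hasDerivAt_id z).const_mul 4).const_sub 1).congr_deriv (by norm_num)
  have h2 : (1 - 4*z) ≠ 0 := by nlinarith
  have h := (Real.hasDerivAt_sqrt h2).comp z h1
  refine h.congr_deriv ?_
  rw [w]
  field_simp
  ring

lemma hasDerivAt_B (hz : z < 1/4) : HasDerivAt B ((B z)^2 / w z) z := by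
  have hw := hasDerivAt_w hz
  have h1 : (1 + w z) ≠ 0 := (one_add_w_pos).ne'
  have h := ((hw.const_add 1).inv h1).const_mul 2
  refine h.congr_deriv ?_
  rw [B]
  have hwz := (w_pos hz).ne'
  field_simp

lemma rpow_succ₁ (hb : (0:ℝ) < B z) : B z ^ (α + 1) = B z ^ α * B z :=
  Real.rpow_add_one hb.ne' α

lemma rpow_succ₂ (hb : (0:ℝ) < B z) : B z ^ (α + 2) = B z ^ α * B z * B z := by
  rw [show α + 2 = (α + 1) + 1 by ring, Real.rpow_add_one hb.ne', rpow_succ₁ hb]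

lemma hasDerivAt_U (hz : z < 1/4) : HasDerivAt (U α) (V α z) z := by
  have hb := B_pos (z := z)
  have h := (hasDerivAt_B hz).rpow_const (p := α) (Or.inl hb.ne')
  refine h.congr_deriv ?_
  rw [V, rpow_succ₁ hb, show B z ^ (α - 1) = B z ^ α / B z from by
    rw [Real.rpow_sub hb, Real.rpow_one]]
  have hwz := (w_pos hz).ne'
  field_simp

lemma hasDerivAt_V (hz : z < 1/4) : HasDerivAt (V α) (V' α z) z := by
  have hb := B_pos (z := z)
  have hwz := (w_pos hz).ne'
  have hN : HasDerivAt (fun y => α * B y ^ (α+1)) (α * ((α+1) * B z ^ (α+2) / w z)) z := by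
    have h := ((hasDerivAt_B hz).rpow_const (p := α+1) (Or.inl hb.ne')).const_mul α
    have heq : α * ((α+1) * B z ^ (α+2) / w z)
        = α * (B z ^ 2 / w z * (α+1) * B z ^ (α + 1 - 1)) := by
      rw [show α + 1 - 1 = α by ring, rpow_succ₂ hb]
      field_simp
    rw [heq]
    exact h
  have h := hN.div (hasDerivAt_w hz) hwz
  refine h.congr_deriv ?_
  rw [V', rpow_succ₂ hb, rpow_succ₁ hb]
  field_simp
  ring

lemma U_ode (hz0 : 0 < z) (hz : z < 1/4) :
    z * (1 - 4*z) * V' α z + ((α+1) - (4*α+6)*z) * V α z - α*(α+1) * U α z = 0 := by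
  have hb := B_pos (z := z)
  have hwpos := w_pos hz
  have h2b : 0 < 2 - B z := by linarith [B_lt_two hz]
  rw [V', V, U, rpow_succ₂ hb, rpow_succ₁ hb]
  have hwe := hw_eq hz
  have hze := hz_eq hz
  set b := B z with hbdef
  set ww := w z with hwwdef
  have hbne : b ≠ 0 := hb.ne'
  have h2bne : (2:ℝ) - b ≠ 0 := h2b.ne'
  rw [hwe, hze]
  field_simp
  ring

end Bside


section Wronskian

variable {α r : ℝ}

lemma w_zero : w 0 = 1 := by
  rw [w]; norm_num

lemma B_zero : B 0 = 1 := by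
  rw [B, w_zero]; norm_num

lemma U_zero : U α 0 = 1 := by
  rw [U, B_zero, Real.one_rpow]

lemma V_zero : V α 0 = α := by
  rw [V, B_zero, w_zero, Real.one_rpow]; norm_num

/-- constancy on an open interval from vanishing derivative -/
lemma const_on_Ioo {f : ℝ → ℝ} {a b : ℝ} (h : ∀ x ∈ Ioo a b, HasDerivAt f 0 x) :
    ∀ x ∈ Ioo a b, ∀ y ∈ Ioo a b, f x = f y := by
  have key : ∀ x ∈ Ioo a b, ∀ y ∈ Ioo a b, x ≤ y → f y = f x := by
    intro x hx y hy hxy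
    have hsub : Icc x y ⊆ Ioo a b := fun t ht => ⟨lt_of_lt_of_le hx.1 ht.1, lt_of_le_of_lt ht.2 hy.2⟩
    have := constant_of_has_deriv_right_zero
      (f := f) (a := x) (b := y)
      (fun t ht => (h t (hsub ht)).continuousAt.continuousWithinAt)
      (fun t ht => (h t (hsub (Ico_subset_Icc_self ht))).hasDerivWithinAt.mono (fun s hs => hs))
    exact this y ⟨hxy, le_refl y⟩
  intro x hx y hy
  rcases le_total x y with hxy | hxy
  · exact (key x hx y hy hxy).symm
  · exact key y hy x hx hxy

lemma eq_of_tendsto_const {f : ℝ → ℝ} {cst : ℝ} {b : ℝ}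
    (hconst : ∀ x ∈ Ioo (0:ℝ) b, ∀ y ∈ Ioo (0:ℝ) b, f x = f y)
    (hlim : Tendsto f (𝓝[>] (0:ℝ)) (𝓝 cst)) : ∀ x ∈ Ioo (0:ℝ) b, f x = cst := by
  intro x hx
  have hmem : Ioo (0:ℝ) x ∈ 𝓝[>] (0:ℝ) :=
    Ioo_mem_nhdsGT_of_mem ⟨le_refl _, hx.1⟩
  have hev : (fun _ => f x) =ᶠ[𝓝[>] (0:ℝ)] f := by
    filter_upwards [hmem] with y hy
    exact hconst x hx y ⟨hy.1, hy.2.trans hx.2⟩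
  exact tendsto_nhds_unique (tendsto_const_nhds.congr' hev) hlim

variable (hα : 0 < α) (hr : 0 < r) (hq : 4 * r < 1)

include hα hr hq in
lemma hasDerivAt_W {z : ℝ} (hz : z ∈ Ioo (-r) r) :
    HasDerivAt (fun y => T α y * V α y - T1 α y * U α y)
      (T α z * V' α z - T2 α z * U α z) z := by
  have hz4 : z < 1/4 := by cases hz; linarith
  have h1 := (hasDerivAt_T hα hr hq hz).mul (hasDerivAt_V (α := α) hz4)
  have h2 := (hasDerivAt_T1 hα hr hq hz).mul (hasDerivAt_U (α := α) hz4)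
  refine (h1.sub h2).congr_deriv ?_
  ring

include hα hr hq in
lemma hasDerivAt_M {z : ℝ} (hz : z ∈ Ioo (0:ℝ) r) :
    HasDerivAt (fun y => y ^ (α+1) * w y * (T α y * V α y - T1 α y * U α y)) 0 z := by
  have hz4 : z < 1/4 := by cases hz; linarith
  have hzmem : z ∈ Ioo (-r) r := ⟨by cases hz; linarith, hz.2⟩
  have hz0 : 0 < z := hz.1
  have h1 : HasDerivAt (fun y : ℝ => y ^ (α+1)) ((α+1) * z ^ α) z := by
    have h := Real.hasDerivAt_rpow_const (x := z) (p := α+1) (Or.inl hz0.ne')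
    convert h using 1
    rw [show α + 1 - 1 = α by ring]
  have h2 := hasDerivAt_w hz4
  have h3 := hasDerivAt_W hα hr hq hzmem
  have hD := (h1.mul h2).mul h3
  refine hD.congr_deriv ?_
  simp only [Pi.mul_apply]
  -- algebra: show 0 = D
  have hkey : z * (1 - 4*z) * (T α z * V' α z - T2 α z * U α z)
      = -(((α+1) - (4*α+6)*z)) * (T α z * V α z - T1 α z * U α z) := by
    have hT := T_ode hα hr hq hzmem
    have hU := U_ode (α := α) hz0 hz4
    linear_combination (T α z) * hU - (U α z) * hT
  have hw2 : w z ^ 2 = 1 - 4*z := w_sq hz4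
  have hwne : w z ≠ 0 := (w_pos hz4).ne'
  have hzp1 : z ^ (α+1) = z ^ α * z := Real.rpow_add_one hz0.ne' α
  set P := z ^ α with hP
  set E := T α z * V' α z - T2 α z * U α z with hE
  set Wv := T α z * V α z - T1 α z * U α z with hWv
  rw [hzp1]
  calc ((α+1) * P * w z + P * z * (-2 / w z)) * Wv + P * z * w z * E
      = (P / w z) * (((α+1) * (w z^2) - 2*z) * Wv + (z * (w z^2) * E)) := by
        field_simp
        ring
    _ = (P / w z) * (((α+1) * (1-4*z) - 2*z) * Wv + (z * (1-4*z) * E)) := by rw [hw2]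
    _ = (P / w z) * (((α+1) * (1-4*z) - 2*z) * Wv + (-(α + 1 - (4*α+6)*z) * Wv)) := by rw [hkey]
    _ = 0 := by ring

include hα hr hq in
lemma M_tendsto_zero :
    Tendsto (fun y => y ^ (α+1) * w y * (T α y * V α y - T1 α y * U α y))
      (𝓝[>] (0:ℝ)) (𝓝 0) := by
  have h0mem : (0:ℝ) ∈ Ioo (-r) r := ⟨by linarith, hr⟩
  have hA : Tendsto (fun y : ℝ => y ^ (α+1)) (𝓝[>] (0:ℝ)) (𝓝 0) := by
    have hc : ContinuousAt (fun y : ℝ => y ^ (α+1)) 0 :=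
      Real.continuousAt_rpow_const 0 (α+1) (Or.inr (by linarith))
    have := hc.tendsto
    rw [Real.zero_rpow (by linarith : α + 1 ≠ 0)] at this
    exact this.mono_left nhdsWithin_le_nhds
  have hw : Tendsto w (𝓝[>] (0:ℝ)) (𝓝 1) := by
    have := (hasDerivAt_w (show (0:ℝ) < 1/4 by norm_num)).continuousAt.tendsto
    rw [w_zero] at this
    exact this.mono_left nhdsWithin_le_nhds
  have hT : Tendsto (T α) (𝓝[>] (0:ℝ)) (𝓝 α⁻¹) := by
    have := (hasDerivAt_T hα hr hq h0mem).continuousAt.tendsto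
    rw [T_zero hα] at this
    exact this.mono_left nhdsWithin_le_nhds
  have hT1 : Tendsto (T1 α) (𝓝[>] (0:ℝ)) (𝓝 1) := by
    have := (hasDerivAt_T1 hα hr hq h0mem).continuousAt.tendsto
    rw [T1_zero hα] at this
    exact this.mono_left nhdsWithin_le_nhds
  have hV : Tendsto (V α) (𝓝[>] (0:ℝ)) (𝓝 α) := by
    have := (hasDerivAt_V (α := α) (show (0:ℝ) < 1/4 by norm_num)).continuousAt.tendsto
    rw [V_zero] at this
    exact this.mono_left nhdsWithin_le_nhds
  have hU : Tendsto (U α) (𝓝[>] (0:ℝ)) (𝓝 1) := by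
    have := (hasDerivAt_U (α := α) (show (0:ℝ) < 1/4 by norm_num)).continuousAt.tendsto
    rw [U_zero] at this
    exact this.mono_left nhdsWithin_le_nhds
  have htot := (hA.mul hw).mul ((hT.mul hV).sub (hT1.mul hU))
  have : (0:ℝ) * 1 * (α⁻¹ * α - 1 * 1) = 0 := by
    simp
  rwa [this] at htot

include hα hr hq in
lemma W_eq_zero {z : ℝ} (hz : z ∈ Ioo (0:ℝ) r) :
    T α z * V α z - T1 α z * U α z = 0 := by
  set M := fun y : ℝ => y ^ (α+1) * w y * (T α y * V α y - T1 α y * U α y) with hM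
  have hconst := const_on_Ioo (f := M) (a := 0) (b := r) (fun x hx => hasDerivAt_M hα hr hq hx)
  have hMz := eq_of_tendsto_const hconst (M_tendsto_zero hα hr hq) z hz
  have hz4 : z < 1/4 := by cases hz; linarith
  have h1 : (0:ℝ) < z ^ (α+1) := Real.rpow_pos_of_pos hz.1 _
  have h2 := w_pos hz4
  have : z ^ (α+1) * w z * (T α z * V α z - T1 α z * U α z) = 0 := hMz
  rcases mul_eq_zero.mp this with h | h
  · rcases mul_eq_zero.mp h with h' | h'
    · exact absurd h' h1.ne'
    · exact absurd h' h2.ne'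
  · exact h

include hα hr hq in
lemma T_eq_U {z : ℝ} (hz : z ∈ Ioo (0:ℝ) r) : T α z = α⁻¹ * U α z := by
  set ψ := fun y : ℝ => T α y / U α y with hψ
  have hUpos : ∀ y : ℝ, 0 < U α y := fun y => Real.rpow_pos_of_pos B_pos α
  have hderiv : ∀ x ∈ Ioo (0:ℝ) r, HasDerivAt ψ 0 x := by
    intro x hx
    have hx4 : x < 1/4 := by cases hx; linarith
    have hxmem : x ∈ Ioo (-r) r := ⟨by cases hx; linarith, hx.2⟩
    have h := (hasDerivAt_T hα hr hq hxmem).div (hasDerivAt_U (α := α) hx4) (hUpos x).ne'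
    have hW := W_eq_zero hα hr hq hx
    have : (T1 α x * U α x - T α x * V α x) / (U α x)^2 = 0 := by
      rw [show T1 α x * U α x - T α x * V α x = -(T α x * V α x - T1 α x * U α x) by ring, hW]
      simp
    rwa [this] at h
  have hconst := const_on_Ioo hderiv
  have hlim : Tendsto ψ (𝓝[>] (0:ℝ)) (𝓝 α⁻¹) := by
    have h0mem : (0:ℝ) ∈ Ioo (-r) r := ⟨by linarith, hr⟩
    have hT : Tendsto (T α) (𝓝[>] (0:ℝ)) (𝓝 α⁻¹) := by
      have := (hasDerivAt_T hα hr hq h0mem).continuousAt.tendsto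
      rw [T_zero hα] at this
      exact this.mono_left nhdsWithin_le_nhds
    have hU : Tendsto (U α) (𝓝[>] (0:ℝ)) (𝓝 1) := by
      have := (hasDerivAt_U (α := α) (show (0:ℝ) < 1/4 by norm_num)).continuousAt.tendsto
      rw [U_zero] at this
      exact this.mono_left nhdsWithin_le_nhds
    have := hT.div hU one_ne_zero
    rwa [div_one] at this
  have hψz := eq_of_tendsto_const hconst hlim z hz
  have hUne := (hUpos z).ne'
  have heq : T α z / U α z = α⁻¹ := hψz
  rw [div_eq_iff hUne] at heq
  exact heq

end Wronskian

/-- Part B main result -/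
lemma T_closed_form {α z : ℝ} (hα : 0 < α) (hz0 : 0 < z) (hz : z < 1/4) :
    T α z = α⁻¹ * (2 / (1 + Real.sqrt (1 - 4*z))) ^ α := by
  set r := (z + 1/4)/2 with hrdef
  have hr : 0 < r := by rw [hrdef]; linarith
  have hq : 4 * r < 1 := by rw [hrdef]; linarith
  have hzr : z ∈ Ioo (0:ℝ) r := ⟨hz0, by rw [hrdef]; linarith⟩
  have := T_eq_U hα hr hq hzr
  rw [this, U, B, w]


section PartA


lemma integral_inv_scale (g : ℝ → ℝ) {cc : ℝ} (hc : 0 < cc) :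
    ∫ t in Ioi (0:ℝ), (cc / t^2) * g (cc / t) = ∫ u in Ioi (0:ℝ), g u := by
  have hinv : ∫ x in Ioi (0:ℝ), (1/x^2) * g x⁻¹ = ∫ u in Ioi (0:ℝ), g u := by
    rw [← integral_comp_rpow_Ioi g (p := (-1:ℝ)) (by norm_num)]
    apply setIntegral_congr_fun measurableSet_Ioi
    intro x hx
    have hx0 : (0:ℝ) < x := hx
    have h1 : x ^ ((-1:ℝ) - 1) = 1 / x^2 := by
      rw [show (-1:ℝ) - 1 = -((2:ℕ):ℝ) by norm_num, Real.rpow_neg hx0.le, Real.rpow_natCast,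
        one_div]
    have h2 : x ^ (-1:ℝ) = x⁻¹ := by
      rw [show (-1:ℝ) = -((1:ℕ):ℝ) by norm_num, Real.rpow_neg hx0.le, Real.rpow_natCast, pow_one]
    simp only [smul_eq_mul, h1, h2, abs_neg, abs_one, one_mul]
  have hstep : ∀ t ∈ Ioi (0:ℝ), (cc / t^2) * g (cc / t)
      = (1/cc) * ((fun x => (1/x^2) * g x⁻¹) ((1/cc) * t)) := by
    intro t ht
    have ht0 : (0:ℝ) < t := ht
    have harg : ((1/cc) * t)⁻¹ = cc / t := by
      rw [mul_inv, one_div, inv_inv]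
      field_simp
    simp only [harg]
    have h3 : (1 / ((1/cc)*t)^2) = cc^2/t^2 := by
      rw [mul_pow]
      field_simp
    rw [h3]
    field_simp
  rw [setIntegral_congr_fun measurableSet_Ioi hstep, integral_const_mul,
    integral_comp_mul_left_Ioi (fun x => (1/x^2) * g x⁻¹) 0 (show (0:ℝ) < 1/cc by positivity),
    mul_zero, smul_eq_mul, hinv]
  field_simp

lemma integral_eq_sum {α γ : ℝ} (hα : 0 < α) (hγ0 : 0 < γ) (hγ1 : γ < 1) :
    ∫ u in Ioi (0:ℝ), u⁻¹ * Real.exp (-u) * _root_.besselI α (γ * u)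
      = (γ/2) ^ α * T α (γ^2/4) := by
  set z : ℝ := γ^2/4 with hzdef
  have hz0 : 0 < z := by rw [hzdef]; positivity
  have hz4 : z < 1/4 := by rw [hzdef]; nlinarith
  set d : ℕ → ℝ := fun k => (γ/2)^α * ((γ/2)^(2*k)) / (k.factorial * Real.Gamma (α+k+1))
    with hddef
  set ν : ℕ → ℝ := fun k => α + 2*k with hνdef
  have hν : ∀ k, 0 < ν k := fun k => by
    have : (0:ℝ) ≤ 2*k := by positivity
    simp only [hνdef]; linarith
  have hd : ∀ k, 0 ≤ d k := fun k => by
    have h1 : (0:ℝ) < Real.Gamma (α+k+1) := Real.Gamma_pos_of_pos (by positivity)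
    have h2 : (0:ℝ) < (γ/2)^α := Real.rpow_pos_of_pos (by positivity) _
    simp only [hddef]
    positivity
  set F : ℕ → ℝ → ℝ := fun k u => d k * (Real.exp (-u) * u ^ (ν k - 1)) with hFdef
  have hInt : ∀ k, IntegrableOn (F k) (Ioi (0:ℝ)) := fun k =>
    (Real.GammaIntegral_convergent (hν k)).const_mul (d k)
  have hIntval : ∀ k, ∫ u in Ioi (0:ℝ), F k u = d k * Real.Gamma (ν k) := fun k => by
    rw [hFdef]
    simp only
    rw [integral_const_mul, ← Real.Gamma_eq_integral (hν k)]
  have hdΓ : ∀ k, d k * Real.Gamma (ν k) = (γ/2)^α * (c α k * z ^ k) := fun k => by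
    simp only [hddef, hνdef, c, hzdef]
    rw [show (γ/2)^(2*k) = ((γ/2)^2)^k by rw [pow_mul], show (γ/2)^2 = γ^2/4 by ring]
    field_simp
  have hSum : Summable (fun k => ∫ u in Ioi (0:ℝ), ‖F k u‖) := by
    have heq : ∀ k, ∫ u in Ioi (0:ℝ), ‖F k u‖ = d k * Real.Gamma (ν k) := fun k => by
      rw [← hIntval k]
      apply setIntegral_congr_fun measurableSet_Ioi
      intro u hu
      have hu0 : (0:ℝ) < u := hu
      simp only [hFdef]
      rw [Real.norm_eq_abs, abs_of_nonneg]
      exact mul_nonneg (hd k) (mul_nonneg (Real.exp_nonneg _) (Real.rpow_nonneg hu0.le _))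
    rw [funext heq]
    simp only [hdΓ]
    set rr : ℝ := (z + 1/4)/2 with hrr
    have hr : 0 < rr := by rw [hrr]; linarith
    have hq : 4 * rr < 1 := by rw [hrr]; linarith
    have hzr : |z| ≤ rr := by rw [abs_of_pos hz0, hrr]; linarith
    exact (summable_T hα hr hq hzr).mul_left _
  have hswap := MeasureTheory.integral_tsum_of_summable_integral_norm hInt hSum
  have hcongr : ∀ u ∈ Ioi (0:ℝ), u⁻¹ * Real.exp (-u) * _root_.besselI α (γ * u) = ∑' k, F k u := by
    intro u hu
    have hu0 : (0:ℝ) < u := hu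
    rw [_root_.besselI]
    have harg : γ * u / 2 = (γ/2) * u := by ring
    rw [harg]
    have hpow : ((γ/2) * u) ^ α = (γ/2)^α * u^α :=
      Real.mul_rpow (by positivity) hu0.le
    rw [hpow, ← tsum_mul_left, ← tsum_mul_left]
    apply tsum_congr
    intro k
    simp only [hFdef, hνdef]
    rw [mul_pow]
    have hupow : u ^ (α + 2*(k:ℝ) - 1) = u ^ α * u^(2*k:ℕ) * u⁻¹ := by
      rw [show α + 2*(k:ℝ) - 1 = α + ((2*k:ℕ):ℝ) + (-((1:ℕ):ℝ)) by push_cast; ring,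
        Real.rpow_add hu0, Real.rpow_add hu0, Real.rpow_natCast, Real.rpow_neg hu0.le,
        Real.rpow_natCast, pow_one]
    rw [hupow]
    simp only [hddef]
    field_simp
  rw [setIntegral_congr_fun measurableSet_Ioi hcongr, ← hswap, funext hIntval, funext hdΓ,
    tsum_mul_left, T]

end PartA


end BesselAux

open BesselAux in

theorem stmt1 (ρ r α : ℝ) (hρ : 0 < ρ) (hr : 0 < r) (hα : 0 < α) (hne : ρ ≠ r) :
    (∫ t in Ioi (0:ℝ), t⁻¹ * Real.exp (-(ρ ^ 2 + r ^ 2) / (2 * t)) * besselI α (ρ * r / t))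
      = α⁻¹ * (2 * ρ * r / (ρ ^ 2 + r ^ 2)) ^ α *
        (1 + Real.sqrt (1 - (2 * ρ * r / (ρ ^ 2 + r ^ 2)) ^ 2)) ^ (-α) := by
  set s : ℝ := ρ^2 + r^2 with hs
  have hs0 : 0 < s := by positivity
  set γ : ℝ := 2*ρ*r/s with hγ
  have hγ0 : 0 < γ := by rw [hγ]; positivity
  have hγ1 : γ < 1 := by
    rw [hγ, div_lt_one hs0, hs]
    have hsub : ρ - r ≠ 0 := sub_ne_zero.mpr hne
    have h2 : 0 < (ρ-r)^2 := lt_of_le_of_ne (sq_nonneg _) (Ne.symm (pow_ne_zero 2 hsub))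
    nlinarith
  set cc : ℝ := s/2 with hcc
  have hcc0 : 0 < cc := by rw [hcc]; positivity
  set g : ℝ → ℝ := fun u => u⁻¹ * Real.exp (-u) * besselI α (γ * u) with hg
  have hstep1 : ∀ t ∈ Ioi (0:ℝ), t⁻¹ * Real.exp (-s/(2*t)) * besselI α (ρ*r/t)
      = (cc/t^2) * g (cc/t) := by
    intro t ht
    have ht0 : (0:ℝ) < t := ht
    rw [hg]
    simp only
    have h1 : (cc/t)⁻¹ = t/cc := by rw [inv_div]
    have h2 : γ * (cc/t) = ρ*r/t := by
      rw [hγ, hcc]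
      field_simp
    have h3 : -s/(2*t) = -(cc/t) := by
      rw [hcc]
      field_simp
    rw [h1, h2, h3]
    field_simp
  rw [setIntegral_congr_fun measurableSet_Ioi hstep1, integral_inv_scale g hcc0]
  have hz0 : (0:ℝ) < γ^2/4 := by positivity
  have hz4 : γ^2/4 < 1/4 := by nlinarith
  rw [hg]
  simp only
  rw [integral_eq_sum hα hγ0 hγ1, T_closed_form hα hz0 hz4,
    show (1:ℝ) - 4*(γ^2/4) = 1 - γ^2 by ring]
  set q : ℝ := Real.sqrt (1-γ^2) with hqdef
  have hq0 : 0 ≤ q := Real.sqrt_nonneg _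
  have h1q : 0 < 1 + q := by linarith
  rw [show (γ/2)^α * (α⁻¹ * (2/(1+q))^α) = α⁻¹ * ((γ/2)^α * (2/(1+q))^α) by ring,
    ← Real.mul_rpow (by positivity) (by positivity),
    show (γ/2) * (2/(1+q)) = γ/(1+q) by field_simp,
    Real.div_rpow hγ0.le h1q.le, Real.rpow_neg h1q.le]
  ring
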